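/- Let V be a collection of subsets of a finite linearly ordered set E, each of cardinality at least 2, such that for any two distinct S_1, S_2 ∈ V, either S_1 ◁ S_2 or S_2 ◁ S_1, where S_1 ◁ S_2 means: S_1 is an initial segment of S_1 ∪ S_2 and (S_1 \ {max S_1}) ∪ S_2 is strictly contained in S_1 ∪ S_2. Then the relation ◁ is a strict total order on V. -/
import Mathlib


/-- `S ◁ T`: `S` is nonempty, `S` is an initial segment of `S ∪ T` (every element of
`S ∪ T` that is `≤ max S` lies in `S`), and `(S \ {max S}) ∪ T ⊊ S ∪ T`.
The maximum of `S` is encoded as any `m ∈ S` that is an upper bound of `S`. -/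
def Tri {E : Type*} [LinearOrder E] (S T : Finset E) : Prop :=
  S.Nonempty ∧ ∀ m ∈ S, (∀ y ∈ S, y ≤ m) →
    (∀ x ∈ S ∪ T, x ≤ m → x ∈ S) ∧ S.erase m ∪ T ⊂ S ∪ T

section Aux

variable {E : Type*} [LinearOrder E] {S T : Finset E}

lemma tri_key (h : Tri S T) {x : E} (hx : x ∈ T) (hle : x ≤ S.max' h.1) :
    x ∈ S ∧ x ≠ S.max' h.1 := by
  obtain ⟨hne, h2⟩ := h
  obtain ⟨hinit, hssub⟩ := h2 (S.max' hne) (S.max'_mem hne) (fun y hy => S.le_max' y hy)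
  have hxS : x ∈ S := hinit x (Finset.mem_union_right _ hx) hle
  refine ⟨hxS, ?_⟩
  rintro rfl
  apply hssub.2
  intro y hy
  rcases Finset.mem_union.mp hy with h' | h'
  · rcases eq_or_ne y (S.max' hne) with rfl | hne'
    · exact Finset.mem_union_right _ hx
    · exact Finset.mem_union_left _ (Finset.mem_erase.mpr ⟨hne', h'⟩)
  · exact Finset.mem_union_right _ h'

lemma tri_of (hne : S.Nonempty)
    (hkey : ∀ x ∈ T, x ≤ S.max' hne → x ∈ S ∧ x ≠ S.max' hne) : Tri S T := by
  refine ⟨hne, ?_⟩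
  intro m hm hub
  have hmeq : m = S.max' hne :=
    le_antisymm (S.le_max' m hm) (hub _ (S.max'_mem hne))
  subst hmeq
  constructor
  · intro x hx hxle
    rcases Finset.mem_union.mp hx with h' | h'
    · exact h'
    · exact (hkey x h' hxle).1
  · constructor
    · intro y hy
      rcases Finset.mem_union.mp hy with h' | h'
      · exact Finset.mem_union_left _ (Finset.mem_of_mem_erase h')
      · exact Finset.mem_union_right _ h'
    · intro hsup
      have hmem : S.max' hne ∈ S.erase (S.max' hne) ∪ T :=
        hsup (Finset.mem_union_left _ (S.max'_mem hne))
      rcases Finset.mem_union.mp hmem with h' | h'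
      · exact (Finset.notMem_erase _ _) h'
      · exact (hkey _ h' le_rfl).2 rfl

lemma tri_irrefl (h : Tri S S) : False :=
  (tri_key h (S.max'_mem h.1) le_rfl).2 rfl

lemma tri_asymm (h₁ : Tri S T) (h₂ : Tri T S) : False := by
  rcases le_total (S.max' h₁.1) (T.max' h₂.1) with hle | hle
  · have := tri_key h₂ (S.max'_mem h₁.1) hle
    exact (tri_key h₁ this.1 le_rfl).2 rfl
  · have := tri_key h₁ (T.max'_mem h₂.1) hle
    exact (tri_key h₂ this.1 le_rfl).2 rfl

end Aux

/-- If `V` is a collection of subsets of a finite linear order, each of cardinality at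
least 2, such that any two distinct members are comparable under `◁`, then `◁` is a
strict total order on `V` (irreflexive, asymmetric and transitive). -/
theorem stmt6 {E : Type*} [Fintype E] [LinearOrder E] (V : Finset (Finset E))
    (hcard : ∀ S ∈ V, 2 ≤ S.card)
    (htot : ∀ S₁ ∈ V, ∀ S₂ ∈ V, S₁ ≠ S₂ → Tri S₁ S₂ ∨ Tri S₂ S₁) :
    (∀ S ∈ V, ¬ Tri S S) ∧
    (∀ S₁ ∈ V, ∀ S₂ ∈ V, ¬(Tri S₁ S₂ ∧ Tri S₂ S₁)) ∧
    (∀ S₁ ∈ V, ∀ S₂ ∈ V, ∀ S₃ ∈ V, Tri S₁ S₂ → Tri S₂ S₃ → Tri S₁ S₃) := by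
  refine ⟨fun S _ h => absurd h tri_irrefl,
    fun S₁ _ S₂ _ h => tri_asymm h.1 h.2, ?_⟩
  intro S₁ hV₁ S₂ _ S₃ hV₃ h₁₂ h₂₃
  set m₁ := S₁.max' h₁₂.1 with hm₁
  set m₂ := S₂.max' h₂₃.1 with hm₂
  rcases le_or_gt m₁ m₂ with hle | hlt
  · refine tri_of h₁₂.1 ?_
    intro x hx hxle
    have h2 := tri_key h₂₃ hx (hxle.trans hle)
    exact tri_key h₁₂ h2.1 hxle
  · -- case m₂ < m₁ : use totality to get Tri S₁ S₃ or derive a contradiction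
    have hne : S₁ ≠ S₃ := by
      rintro rfl
      exact tri_asymm h₁₂ h₂₃
    rcases htot S₁ hV₁ S₃ hV₃ hne with h | h₃₁
    · exact h
    · exfalso
      set m₃ := S₃.max' h₃₁.1 with hm₃
      rcases le_or_gt m₃ m₂ with hle' | hlt'
      · have h2 := tri_key h₂₃ (S₃.max'_mem h₃₁.1) hle'
        have h1 := tri_key h₁₂ h2.1 (hle'.trans hlt.le)
        exact (tri_key h₃₁ h1.1 le_rfl).2 rfl
      · have h1 := tri_key h₁₂ (S₂.max'_mem h₂₃.1) hlt.le
        have h3 := tri_key h₃₁ h1.1 hlt'.le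
        exact (tri_key h₂₃ h3.1 le_rfl).2 rfl
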